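/- Define f(z) = h(z) + conj(g(z)) where h(z) = (−6iz − 3z² + iz³)/(6(i+z)³) and g(z) = (3z² + iz³)/(6(i+z)³). Then f(√3/3) = f(−√3/3) = 3i/8; in particular, f is not injective on the unit disk. -/

import Mathlib

open Complex Set Metric

/-- Projection of a planar set onto the imaginary axis. -/
def Py (D : Set ℂ) : Set ℝ := {a : ℝ | ∃ z ∈ D, z.im = a}

/-- `Λ_y(D)`: imaginary parts `a` such that the horizontal slice of `D` at height `a`
is nonempty and connected. -/
def Ly (D : Set ℂ) : Set ℝ := {a : ℝ | IsConnected (D ∩ {z : ℂ | z.im = a})}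

/-- Convexity in the direction of the real axis. -/
def CvxRe (D : Set ℂ) : Prop :=
  ∀ z ∈ D, ∀ w ∈ D, z.im = w.im → segment ℝ z w ⊆ D

/-- Local injectivity of `q` on `S`. -/
def LocInjOn (q : ℂ → ℂ) (S : Set ℂ) : Prop :=
  ∀ z ∈ S, ∃ U ∈ nhdsWithin z S, Set.InjOn q U
lemma shear_key (h g f : ℂ → ℂ)
    (hh : ∀ z, h z = (-6 * I * z - 3 * z ^ 2 + I * z ^ 3) / (6 * (I + z) ^ 3))
    (hg : ∀ z, g z = (3 * z ^ 2 + I * z ^ 3) / (6 * (I + z) ^ 3))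
    (hf : ∀ z, f z = h z + (starRingEnd ℂ) (g z))
    (x : ℝ) (hx : (x : ℂ) ^ 2 = 1 / 3) : f x = 3 * I / 8 := by
  have hz : (I + (x : ℂ)) ≠ 0 := by
    intro hc
    have : (I + (x : ℂ)).im = 0 := by rw [hc]; simp
    simp [Complex.add_im] at this
  have hz' : (-I + (x : ℂ)) ≠ 0 := by
    intro hc
    have : (-I + (x : ℂ)).im = 0 := by rw [hc]; simp
    simp at this
  rw [hf, hh, hg]
  rw [map_div₀]
  simp only [map_add, map_mul, map_pow, map_sub, map_neg, map_ofNat,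
    Complex.conj_I, Complex.conj_ofReal]
  have h6 : (6 : ℂ) ≠ 0 := by norm_num
  field_simp [hz, hz']
  ring_nf
  have h3 : (x:ℂ)^3 = x/3 := by linear_combination (x:ℂ)*hx
  have h4 : (x:ℂ)^4 = 1/9 := by linear_combination ((x:ℂ)^2+1/3)*hx
  have h5 : (x:ℂ)^5 = x/9 := by linear_combination ((x:ℂ)^3+(x:ℂ)/3)*hx
  have h6' : (x:ℂ)^6 = 1/27 := by linear_combination ((x:ℂ)^4+(x:ℂ)^2/3+1/9)*hx
  have i3 : I^3 = -I := by linear_combination I*Complex.I_sq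
  have i4 : I^4 = 1 := by linear_combination (I^2-1)*Complex.I_sq
  have i5 : I^5 = I := by linear_combination (I^3-I)*Complex.I_sq
  have i7 : I^7 = -I := by linear_combination (I^5-I^3+I)*Complex.I_sq
  simp only [h3, h4, h5, h6', hx, i3, i4, i5, i7, Complex.I_sq]
  ring

theorem shear_koebe_not_injective
    (h g f : ℂ → ℂ)
    (hh : ∀ z, h z = (-6 * I * z - 3 * z ^ 2 + I * z ^ 3) / (6 * (I + z) ^ 3))
    (hg : ∀ z, g z = (3 * z ^ 2 + I * z ^ 3) / (6 * (I + z) ^ 3))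
    (hf : ∀ z, f z = h z + (starRingEnd ℂ) (g z)) :
    f ((Real.sqrt 3 / 3 : ℝ) : ℂ) = 3 * I / 8 ∧
    f ((-(Real.sqrt 3) / 3 : ℝ) : ℂ) = 3 * I / 8 ∧
    ¬ Set.InjOn f (ball (0 : ℂ) 1) := by
  have hs : Real.sqrt 3 ^ 2 = 3 := Real.sq_sqrt (by norm_num)
  have hx1 : ((Real.sqrt 3 / 3 : ℝ) : ℂ) ^ 2 = 1 / 3 := by
    push_cast; rw [div_pow]; norm_cast; rw [hs]; norm_num
  have hx2 : ((-(Real.sqrt 3) / 3 : ℝ) : ℂ) ^ 2 = 1 / 3 := by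
    push_cast; rw [div_pow, neg_pow]; norm_cast; rw [hs]; norm_num
  have e1 := shear_key h g f hh hg hf _ hx1
  have e2 := shear_key h g f hh hg hf _ hx2
  refine ⟨e1, e2, fun hinj => ?_⟩
  have hpos : 0 < Real.sqrt 3 := Real.sqrt_pos.mpr (by norm_num)
  have hlt : |Real.sqrt 3| / 3 < 1 := by
    rw [_root_.abs_of_nonneg (Real.sqrt_nonneg 3)]
    nlinarith [Real.sq_sqrt (show (0:ℝ) ≤ 3 by norm_num), Real.sqrt_nonneg 3]
  have m1 : ((Real.sqrt 3 / 3 : ℝ) : ℂ) ∈ ball (0 : ℂ) 1 := by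
    simp [Complex.norm_real, abs_of_pos (by positivity : (0:ℝ) < Real.sqrt 3 / 3), hlt]
  have m2 : ((-(Real.sqrt 3) / 3 : ℝ) : ℂ) ∈ ball (0 : ℂ) 1 := by
    simp [Complex.norm_real, abs_div, hlt]
  have := hinj m1 m2 (by rw [e1, e2])
  rw [Complex.ofReal_inj] at this
  nlinarith
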